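/- Let (M,d) be a metric space. If the Gaussian kernel k(x,y) = exp(−γ d(x,y)²) is positive definite for all γ > 0, then there exist a real inner product space V and a map ψ : M → V such that d(x,y) = ‖ψ(x) − ψ(y)‖ for all x,y ∈ M. -/

import Mathlib

def IsPosDefKernel {X : Type*} (k : X → X → ℝ) : Prop :=
  (∀ x y, k x y = k y x) ∧
  ∀ (m : ℕ) (x : Fin m → X) (c : Fin m → ℝ),
    0 ≤ ∑ i, ∑ j, c i * c j * k (x i) (x j)

universe u

open Real Filter Finset

private lemma gauss_slope_lim (t : ℝ) :
    Tendsto (fun γ : ℝ => (1 - Real.exp (-γ * t)) / γ) (nhdsWithin 0 (Set.Ioi 0)) (nhds t) := by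
  have h1 : HasDerivAt (fun γ : ℝ => -γ * t) (-t) 0 := by
    simpa using ((hasDerivAt_id (0:ℝ)).neg.mul_const t)
  have h2 : HasDerivAt (fun γ : ℝ => 1 - Real.exp (-γ * t)) t 0 := by
    simpa using (h1.exp.const_sub 1)
  have h3 := hasDerivAt_iff_tendsto_slope.1 h2
  have h4 : Tendsto (slope (fun γ : ℝ => 1 - Real.exp (-γ * t)) 0)
      (nhdsWithin 0 (Set.Ioi 0)) (nhds t) :=
    h3.mono_left (nhdsWithin_mono 0 (fun x hx => ne_of_gt hx))
  refine h4.congr' ?_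
  filter_upwards [self_mem_nhdsWithin] with γ hγ
  simp [slope_def_field, div_eq_div_iff]

private lemma gauss_negdef {M : Type u} [MetricSpace M]
    (h : ∀ γ : ℝ, 0 < γ →
      IsPosDefKernel (fun x y : M => Real.exp (-γ * dist x y ^ 2)))
    {m : ℕ} (x : Fin m → M) (c : Fin m → ℝ) (hc : ∑ i, c i = 0) :
    ∑ i, ∑ j, c i * c j * dist (x i) (x j) ^ 2 ≤ 0 := by
  have tend : Tendsto
      (fun γ : ℝ => ∑ i, ∑ j, c i * c j * ((1 - Real.exp (-γ * dist (x i) (x j) ^ 2)) / γ))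
      (nhdsWithin 0 (Set.Ioi 0))
      (nhds (∑ i, ∑ j, c i * c j * dist (x i) (x j) ^ 2)) := by
    refine tendsto_finset_sum _ fun i _ => tendsto_finset_sum _ fun j _ => ?_
    exact (gauss_slope_lim _).const_mul _
  refine le_of_tendsto tend ?_
  filter_upwards [self_mem_nhdsWithin] with γ (hγ : 0 < γ)
  have hpos := (h γ hγ).2 m x c
  have key : ∑ i, ∑ j, c i * c j * ((1 - Real.exp (-γ * dist (x i) (x j) ^ 2)) / γ)
      = ((∑ i, c i) * (∑ j, c j)
          - ∑ i, ∑ j, c i * c j * Real.exp (-γ * dist (x i) (x j) ^ 2)) / γ := by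
    rw [Finset.sum_mul_sum, ← Finset.sum_sub_distrib, Finset.sum_div]
    refine Finset.sum_congr rfl fun i _ => ?_
    rw [← Finset.sum_sub_distrib, Finset.sum_div]
    refine Finset.sum_congr rfl fun j _ => ?_
    ring
  rw [key, hc]
  apply div_nonpos_of_nonpos_of_nonneg _ hγ.le
  linarith

private lemma gauss_K_psd {M : Type u} [MetricSpace M] (x₀ : M)
    (hneg : ∀ {m : ℕ} (x : Fin m → M) (c : Fin m → ℝ), (∑ i, c i = 0) →
      ∑ i, ∑ j, c i * c j * dist (x i) (x j) ^ 2 ≤ 0)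
    {m : ℕ} (x : Fin m → M) (c : Fin m → ℝ) :
    0 ≤ ∑ i, ∑ j, c i * c j *
      ((dist (x i) x₀ ^ 2 + dist (x j) x₀ ^ 2 - dist (x i) (x j) ^ 2) / 2) := by
  set S := ∑ i, c i with hS
  set A := ∑ i, c i * dist (x i) x₀ ^ 2 with hA
  set T := ∑ i, ∑ j, c i * c j * dist (x i) (x j) ^ 2 with hT
  set c' : Fin (m+1) → ℝ := Fin.snoc c (-S) with hc'
  set x' : Fin (m+1) → M := Fin.snoc x x₀ with hx'
  have h1 := hneg x' c' (by simp [hc', Fin.sum_univ_castSucc, hS])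
  have h2 : T - S * A - S * A ≤ 0 := by
    have e : ∑ i, ∑ j, c' i * c' j * dist (x' i) (x' j) ^ 2 = T - S * A - S * A := by
      simp only [hc', hx', Fin.sum_univ_castSucc, Fin.snoc_castSucc, Fin.snoc_last, dist_self]
      have t1 : ∀ i, c i * -S * dist (x i) x₀ ^ 2 = -(S * (c i * dist (x i) x₀ ^ 2)) :=
        fun i => by ring
      have t2 : ∀ j, -S * c j * dist x₀ (x j) ^ 2 = -(S * (c j * dist (x j) x₀ ^ 2)) :=
        fun j => by rw [dist_comm]; ring
      simp only [t1, t2]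
      rw [Finset.sum_add_distrib, Finset.sum_neg_distrib, ← Finset.mul_sum, ← hA, ← hT]
      ring
    rw [← e]; exact h1
  have row : ∀ i, ∑ j, c i * c j *
      ((dist (x i) x₀ ^ 2 + dist (x j) x₀ ^ 2 - dist (x i) (x j) ^ 2) / 2)
      = (c i * dist (x i) x₀ ^ 2 * S + c i * A
          - ∑ j, c i * c j * dist (x i) (x j) ^ 2) / 2 := by
    intro i
    have t3 : ∀ j, c i * c j * ((dist (x i) x₀ ^ 2 + dist (x j) x₀ ^ 2
        - dist (x i) (x j) ^ 2) / 2)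
        = (c i * dist (x i) x₀ ^ 2 * c j + c i * (c j * dist (x j) x₀ ^ 2)
            - c i * c j * dist (x i) (x j) ^ 2) / 2 := fun j => by ring
    simp only [t3]
    rw [← Finset.sum_div, Finset.sum_sub_distrib, Finset.sum_add_distrib,
      ← Finset.mul_sum, ← Finset.mul_sum, ← hA, ← hS]
  have e2 : ∑ i, ∑ j, c i * c j *
      ((dist (x i) x₀ ^ 2 + dist (x j) x₀ ^ 2 - dist (x i) (x j) ^ 2) / 2)
      = (A * S + S * A - T) / 2 := by
    simp only [row]
    rw [← Finset.sum_div, Finset.sum_sub_distrib, Finset.sum_add_distrib,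
      ← Finset.sum_mul, ← hA, ← Finset.sum_mul, ← hS, ← hT]
  rw [e2]; linarith

private lemma psd_finset {M : Type u} (K : M → M → ℝ)
    (h : ∀ (m : ℕ) (x : Fin m → M) (c : Fin m → ℝ),
      0 ≤ ∑ i, ∑ j, c i * c j * K (x i) (x j))
    (s : Finset M) (c : M → ℝ) :
    0 ≤ ∑ a ∈ s, ∑ b ∈ s, c a * c b * K a b := by
  classical
  have e := s.equivFin.symm
  have key : ∑ a ∈ s, ∑ b ∈ s, c a * c b * K a b
      = ∑ i : Fin s.card, ∑ j : Fin s.card,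
        c (e i) * c (e j) * K (e i) (e j) := by
    rw [← Finset.sum_coe_sort s, ← Equiv.sum_comp e
      (fun a : s => ∑ b ∈ s, c a * c b * K a b)]
    refine Fintype.sum_congr _ _ fun i => ?_
    rw [← Finset.sum_coe_sort s, ← Equiv.sum_comp e (fun b : s => c (e i) * c b * K (e i) b)]
  rw [key]
  exact h s.card (fun i => e i) (fun i => c (e i))

/-- The semi-inner product on finitely supported functions induced by a kernel `K`. -/
noncomputable def innerK {M : Type u} (K : M → M → ℝ) (f g : M →₀ ℝ) : ℝ :=
  Finsupp.linearCombination ℝ (fun a => Finsupp.linearCombination ℝ (fun b => K a b) g) f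

private lemma innerK_apply {M : Type u} (K : M → M → ℝ) (f g : M →₀ ℝ) :
    innerK K f g = ∑ a ∈ f.support, ∑ b ∈ g.support, f a * (g b * K a b) := by
  rw [innerK, Finsupp.linearCombination_apply, Finsupp.sum]
  refine Finset.sum_congr rfl fun a _ => ?_
  rw [Finsupp.linearCombination_apply, Finsupp.sum, smul_eq_mul, Finset.mul_sum]
  exact Finset.sum_congr rfl fun b _ => by simp [mul_comm]

/-- The `PreInnerProductSpace.Core` structure on `M →₀ ℝ` induced by a symmetric positive
semidefinite kernel. -/
noncomputable def coreK {M : Type u} (K : M → M → ℝ)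
    (hsymm : ∀ a b, K a b = K b a)
    (hpsd : ∀ (s : Finset M) (c : M → ℝ), 0 ≤ ∑ a ∈ s, ∑ b ∈ s, c a * c b * K a b) :
    PreInnerProductSpace.Core ℝ (M →₀ ℝ) where
  inner := innerK K
  conj_inner_symm := fun f g => by
    simp only [starRingEnd_apply, star_trivial]
    rw [innerK_apply, innerK_apply, Finset.sum_comm]
    exact Finset.sum_congr rfl fun a _ => Finset.sum_congr rfl fun b _ => by
      rw [hsymm a b]; ring
  re_inner_nonneg := fun f => by
    simp only [RCLike.re_to_real]
    rw [innerK_apply]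
    refine le_trans (hpsd f.support f) (le_of_eq ?_)
    exact Finset.sum_congr rfl fun a _ => Finset.sum_congr rfl fun b _ => by ring
  add_left := fun f g h => by
    simp only [innerK, map_add]
  smul_left := fun f g r => by
    simp only [innerK, map_smul, smul_eq_mul, starRingEnd_apply, star_trivial]

theorem hilbert_embedding_of_gaussian_posdef
    {M : Type u} [MetricSpace M]
    (h : ∀ γ : ℝ, 0 < γ →
      IsPosDefKernel (fun x y : M => Real.exp (-γ * dist x y ^ 2))) :
    ∃ (V : Type u) (_ : NormedAddCommGroup V) (_ : InnerProductSpace ℝ V)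
      (ψ : M → V), ∀ x y : M, dist x y = ‖ψ x - ψ y‖ := by
  classical
  rcases isEmpty_or_nonempty M with hM | hM
  · exact ⟨EuclideanSpace ℝ (ULift.{u} (Fin 0)), inferInstance, inferInstance,
      fun x => isEmptyElim x, fun x => isEmptyElim x⟩
  · set x₀ : M := Classical.arbitrary M with hx₀
    set K : M → M → ℝ :=
      fun x y => (dist x x₀ ^ 2 + dist y x₀ ^ 2 - dist x y ^ 2) / 2 with hKdef
    have hsymm : ∀ a b, K a b = K b a := fun a b => by
      simp only [hKdef]; rw [dist_comm a b]; ring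
    have hpsdFin : ∀ (m : ℕ) (x : Fin m → M) (c : Fin m → ℝ),
        0 ≤ ∑ i, ∑ j, c i * c j * K (x i) (x j) :=
      fun m x c => gauss_K_psd x₀ (fun x c hc => gauss_negdef h x c hc) x c
    have hpsd : ∀ (s : Finset M) (c : M → ℝ), 0 ≤ ∑ a ∈ s, ∑ b ∈ s, c a * c b * K a b :=
      psd_finset K hpsdFin
    have hK : ∀ x y : M, K x x + K y y - 2 * K x y = dist x y ^ 2 := fun x y => by
      simp only [hKdef, dist_self]; ring
    letI c : PreInnerProductSpace.Core ℝ (M →₀ ℝ) := coreK K hsymm hpsd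
    letI : SeminormedAddCommGroup (M →₀ ℝ) :=
      @InnerProductSpace.Core.toSeminormedAddCommGroup ℝ (M →₀ ℝ) _ _ _ c
    letI : NormedSpace ℝ (M →₀ ℝ) :=
      @InnerProductSpace.Core.toNormedSpace ℝ (M →₀ ℝ) _ _ _ c
    letI : Inner ℝ (M →₀ ℝ) :=
      @InnerProductSpace.Core.toPreInner' ℝ (M →₀ ℝ) _ _ _ c
    letI : InnerProductSpace ℝ (M →₀ ℝ) :=
      { norm_sq_eq_re_inner := fun x => by
          have h1 : ‖x‖ = Real.sqrt (RCLike.re (inner (𝕜 := ℝ) x x)) := rfl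
          rw [h1, Real.sq_sqrt (c.re_inner_nonneg x)]
        conj_inner_symm := c.conj_inner_symm
        add_left := c.add_left
        smul_left := c.smul_left }
    refine ⟨SeparationQuotient (M →₀ ℝ), inferInstance, inferInstance,
      fun x => SeparationQuotient.mk (Finsupp.single x 1), fun x y => ?_⟩
    rw [← SeparationQuotient.mk_sub,
      SeparationQuotient.norm_mk (Finsupp.single x (1:ℝ) - Finsupp.single y 1)]
    have hn : ‖Finsupp.single x (1:ℝ) - Finsupp.single y 1‖
        = Real.sqrt (RCLike.re (inner (𝕜 := ℝ) (Finsupp.single x (1:ℝ) - Finsupp.single y 1)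
            (Finsupp.single x 1 - Finsupp.single y 1))) := rfl
    have hi : inner (𝕜 := ℝ) (Finsupp.single x (1:ℝ) - Finsupp.single y 1)
        (Finsupp.single x 1 - Finsupp.single y 1) = dist x y ^ 2 := by
      show innerK K _ _ = _
      simp only [innerK, map_sub, Finsupp.linearCombination_single, one_smul]
      have := hK x y
      have := hsymm x y
      linarith
    rw [hn]
    have hi' : RCLike.re (inner (𝕜 := ℝ) (Finsupp.single x (1:ℝ) - Finsupp.single y 1)
        (Finsupp.single x 1 - Finsupp.single y 1)) = dist x y ^ 2 := by
      simpa using hi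
    rw [hi', Real.sqrt_sq dist_nonneg]
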